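/- Let R ⊆ S be an extension of commutative rings, and let f, g ∈ R be elements such that f·S ⊆ R and g·S ⊆ R. Then the natural map from the cokernel of the Čech map δ_R : R_f ⊕ R_g → R_{fg} to the cokernel of the Čech map δ_S : S_f ⊕ S_g → S_{fg} (induced by the inclusion R ⊆ S and the canonical maps on localizations) is an isomorphism of R-modules; that is, H²_{f,g}(R) ≅ H²_{f,g}(S). -/
import Mathlib


/-- The canonical localization map `A_u →+* A_{u·v}`. -/
noncomputable def awayLeftMap {A : Type*} [CommRing A] (u v : A) :
    Localization.Away u →+* Localization.Away (u * v) :=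
  IsLocalization.Away.awayToAwayRight (P := Localization.Away (u * v)) u v

/-- The canonical localization map `A_v →+* A_{u·v}`. -/
noncomputable def awayRightMap {A : Type*} [CommRing A] (u v : A) :
    Localization.Away v →+* Localization.Away (u * v) :=
  IsLocalization.Away.awayToAwayLeft (P := Localization.Away (u * v)) v u

/-- The (top) Čech map `δ : A_u ⊕ A_v →+ A_{u·v}`, `(a, b) ↦ ā - b̄`, as an additive map.
Its cokernel is the top Čech cohomology `H²_{u,v}(A)`. -/
noncomputable def cechHom {A : Type*} [CommRing A] (u v : A) :
    Localization.Away u × Localization.Away v →+ Localization.Away (u * v) :=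
  ((awayLeftMap u v).toAddMonoidHom.comp (AddMonoidHom.fst _ _)) -
    ((awayRightMap u v).toAddMonoidHom.comp (AddMonoidHom.snd _ _))

variable {S : Type*} [CommRing S] (R : Subring S)

/-- For `x ∈ R ⊆ S`, the canonical map `R_x →+* S_x`. -/
noncomputable def locMapAway (x : ↥R) : Localization.Away x →+* Localization.Away (x : S) :=
  Localization.awayLift ((algebraMap S (Localization.Away (x : S))).comp R.subtype) x
    (by
    simpa using IsLocalization.Away.algebraMap_isUnit
      (S := Localization.Away (x : S)) (x : S))

/-- The canonical map `R_{fg} →+* S_{fg}` for `f, g ∈ R ⊆ S`. -/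
noncomputable def cechCompareMap (f g : ↥R) :
    Localization.Away (f * g) →+* Localization.Away ((f : S) * (g : S)) :=
  Localization.awayLift
    ((algebraMap S (Localization.Away ((f : S) * (g : S)))).comp R.subtype) (f * g)
    (by
      simpa using IsLocalization.Away.algebraMap_isUnit
        (S := Localization.Away ((f : S) * (g : S))) ((f : S) * (g : S)))

lemma cechCompare_comp_left (f g : ↥R) :
    (cechCompareMap R f g).comp (awayLeftMap f g)
      = (awayLeftMap (f : S) (g : S)).comp (locMapAway R f) := by
  apply IsLocalization.ringHom_ext (Submonoid.powers f)
  ext x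
  simp [cechCompareMap, awayLeftMap, locMapAway,
    IsLocalization.Away.awayToAwayRight_eq, IsLocalization.Away.lift_eq]

lemma cechCompare_comp_right (f g : ↥R) :
    (cechCompareMap R f g).comp (awayRightMap f g)
      = (awayRightMap (f : S) (g : S)).comp (locMapAway R g) := by
  apply IsLocalization.ringHom_ext (Submonoid.powers g)
  ext x
  simp [cechCompareMap, awayRightMap, locMapAway,
    IsLocalization.Away.awayToAwayLeft_eq, IsLocalization.Away.lift_eq]

/-- The natural map `H²_{f,g}(R) → H²_{f,g}(S)` on cokernels of the Čech maps, induced by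
the inclusion `R ⊆ S`. -/
noncomputable def cechCokerMap (f g : ↥R) :
    (Localization.Away (f * g) ⧸ (cechHom f g).range) →+
      (Localization.Away ((f : S) * (g : S)) ⧸ (cechHom (f : S) (g : S)).range) :=
  QuotientAddGroup.map _ _ (cechCompareMap R f g).toAddMonoidHom (by
    rintro x ⟨p, rfl⟩
    refine ⟨(locMapAway R f p.1, locMapAway R g p.2), ?_⟩
    simp only [cechHom, AddMonoidHom.sub_apply, AddMonoidHom.comp_apply,
      AddMonoidHom.coe_fst, AddMonoidHom.coe_snd, RingHom.toAddMonoidHom_eq_coe,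
      AddMonoidHom.coe_coe, AddSubgroup.coe_comap, map_sub]
    conv_rhs => rw [← RingHom.comp_apply, ← RingHom.comp_apply,
      cechCompare_comp_left, cechCompare_comp_right]
    rfl)

lemma locMapAway_algebraMap (x a : ↥R) :
    locMapAway R x (algebraMap ↥R (Localization.Away x) a)
      = algebraMap S (Localization.Away (x : S)) (a : S) := by
  simp [locMapAway, IsLocalization.Away.lift_eq]

lemma cechCompareMap_algebraMap (f g a : ↥R) :
    cechCompareMap R f g (algebraMap ↥R (Localization.Away (f * g)) a)
      = algebraMap S (Localization.Away ((f : S) * (g : S))) (a : S) := by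
  simp [cechCompareMap, IsLocalization.Away.lift_eq]

lemma locMapAway_surjective (x : ↥R) (hx : ∀ s : S, (x : S) * s ∈ R) :
    Function.Surjective (locMapAway R x) := by
  intro z
  obtain ⟨⟨s, m⟩, hm⟩ := IsLocalization.surj (Submonoid.powers (x : S)) z
  obtain ⟨n, hn⟩ := m.2
  refine ⟨IsLocalization.mk' (Localization.Away x) (⟨(x : S) * s, hx s⟩ : ↥R)
    (⟨x ^ (n + 1), n + 1, rfl⟩ : Submonoid.powers x), ?_⟩
  have hspec := IsLocalization.mk'_spec (Localization.Away x)
    (⟨(x : S) * s, hx s⟩ : ↥R) (⟨x ^ (n + 1), n + 1, rfl⟩ : Submonoid.powers x)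
  have h2 := congrArg (locMapAway R x) hspec
  rw [map_mul, locMapAway_algebraMap, locMapAway_algebraMap] at h2
  have hu : IsUnit (algebraMap S (Localization.Away (x : S)) ((x : S) ^ (n + 1))) :=
    IsLocalization.map_units _ (⟨(x : S) ^ (n + 1), n + 1, rfl⟩ : Submonoid.powers (x : S))
  apply hu.mul_right_cancel
  have hn' : (x : S) ^ n = (m : S) := hn
  dsimp only at h2 hm
  rw [← hn'] at hm
  rw [SubmonoidClass.coe_pow] at h2
  rw [h2, map_mul, pow_succ, map_mul, ← hm]
  ring

lemma cechCompareMap_surjective (f g : ↥R)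
    (hf : ∀ s : S, (f : S) * s ∈ R) (hg : ∀ s : S, (g : S) * s ∈ R) :
    Function.Surjective (cechCompareMap R f g) := by
  intro z
  obtain ⟨⟨s, m⟩, hm⟩ := IsLocalization.surj (Submonoid.powers ((f : S) * (g : S))) z
  obtain ⟨n, hn⟩ := m.2
  have hmem : ((f : S) * (g : S)) * s ∈ R := by
    rw [mul_assoc]; exact hf ((g : S) * s)
  refine ⟨IsLocalization.mk' (Localization.Away (f * g)) (⟨((f : S) * (g : S)) * s, hmem⟩ : ↥R)
    (⟨(f * g) ^ (n + 1), n + 1, rfl⟩ : Submonoid.powers (f * g)), ?_⟩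
  have hspec := IsLocalization.mk'_spec (Localization.Away (f * g))
    (⟨((f : S) * (g : S)) * s, hmem⟩ : ↥R)
    (⟨(f * g) ^ (n + 1), n + 1, rfl⟩ : Submonoid.powers (f * g))
  have h2 := congrArg (cechCompareMap R f g) hspec
  rw [map_mul, cechCompareMap_algebraMap, cechCompareMap_algebraMap] at h2
  have hu : IsUnit (algebraMap S (Localization.Away ((f : S) * (g : S)))
      (((f : S) * (g : S)) ^ (n + 1))) :=
    IsLocalization.map_units _
      (⟨((f : S) * (g : S)) ^ (n + 1), n + 1, rfl⟩ : Submonoid.powers ((f : S) * (g : S)))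
  apply hu.mul_right_cancel
  have hn' : ((f : S) * (g : S)) ^ n = (m : S) := hn
  dsimp only at h2 hm
  rw [← hn'] at hm
  rw [SubmonoidClass.coe_pow, Subring.coe_mul] at h2
  rw [h2, map_mul, pow_succ, map_mul, ← hm]
  simp only [map_mul, map_pow]
  ring

lemma cechCompareMap_injective (f g : ↥R) :
    Function.Injective (cechCompareMap R f g) := by
  rw [injective_iff_map_eq_zero]
  intro z hz
  obtain ⟨⟨r, m⟩, hm⟩ := IsLocalization.surj (Submonoid.powers (f * g)) z
  have h2 := congrArg (cechCompareMap R f g) hm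
  rw [map_mul, hz, zero_mul, cechCompareMap_algebraMap] at h2
  obtain ⟨mm, hmm⟩ := (IsLocalization.map_eq_zero_iff
    (Submonoid.powers ((f : S) * (g : S))) _ _).mp h2.symm
  obtain ⟨k, hk⟩ := mm.2
  have hR : ((f * g) ^ k : ↥R) * r = 0 := by
    apply Subtype.ext
    push_cast
    rw [← hk] at hmm
    simpa using hmm
  have hz0 : algebraMap ↥R (Localization.Away (f * g)) r = 0 := by
    rw [IsLocalization.map_eq_zero_iff (Submonoid.powers (f * g))]
    exact ⟨⟨(f * g) ^ k, k, rfl⟩, hR⟩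
  rw [hz0] at hm
  have hu : IsUnit (algebraMap ↥R (Localization.Away (f * g)) (m : ↥R)) :=
    IsLocalization.map_units _ m
  exact hu.mul_right_cancel (by rw [hm, zero_mul])

/-- Let `R ⊆ S` be an extension of commutative rings and `f, g ∈ R` with
`f·S ⊆ R` and `g·S ⊆ R` (i.e. `f` and `g` lie in the conductor).  Then the natural map
`H²_{f,g}(R) → H²_{f,g}(S)` between the cokernels of the Čech maps
`R_f ⊕ R_g → R_{fg}` and `S_f ⊕ S_g → S_{fg}` is an isomorphism. -/
theorem cechCokerMap_bijective {S : Type*} [CommRing S] (R : Subring S) (f g : ↥R)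
    (hf : ∀ s : S, (f : S) * s ∈ R) (hg : ∀ s : S, (g : S) * s ∈ R) :
    Function.Bijective (cechCokerMap R f g) := by
  constructor
  · rw [injective_iff_map_eq_zero]
    intro x
    induction x using QuotientAddGroup.induction_on with
    | H z =>
      intro hz
      rw [cechCokerMap, QuotientAddGroup.map_mk] at hz
      simp only [RingHom.toAddMonoidHom_eq_coe, AddMonoidHom.coe_coe] at hz
      rw [QuotientAddGroup.eq_zero_iff] at hz
      obtain ⟨p, hp⟩ := hz
      obtain ⟨a, ha⟩ := locMapAway_surjective R f hf p.1
      obtain ⟨b, hb⟩ := locMapAway_surjective R g hg p.2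
      rw [QuotientAddGroup.eq_zero_iff]
      refine ⟨(a, b), cechCompareMap_injective R f g ?_⟩
      have h1 := RingHom.congr_fun (cechCompare_comp_left R f g) a
      have h2 := RingHom.congr_fun (cechCompare_comp_right R f g) b
      simp only [RingHom.comp_apply] at h1 h2
      simp only [cechHom, AddMonoidHom.sub_apply, AddMonoidHom.comp_apply,
        AddMonoidHom.coe_fst, AddMonoidHom.coe_snd, RingHom.toAddMonoidHom_eq_coe,
        AddMonoidHom.coe_coe] at hp ⊢
      rw [map_sub, h1, h2, ha, hb, hp]
  · intro y
    induction y using QuotientAddGroup.induction_on with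
    | H z =>
      obtain ⟨w, hw⟩ := cechCompareMap_surjective R f g hf hg z
      exact ⟨QuotientAddGroup.mk w, by
        rw [cechCokerMap, QuotientAddGroup.map_mk]
        simp only [RingHom.toAddMonoidHom_eq_coe, AddMonoidHom.coe_coe]
        rw [hw]⟩
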